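/- For all integers n ≥ 5 and all positive integers k, f_k(n) ≥ C(n−1, k−1) + C(n−3, k−2) + 2·C(n−4, k−2), where C denotes the binomial coefficient. -/
import Mathlib


/-- `fk n k` is the number of relatively prime subsets of `{1,2,...,n}` of
cardinality `k`, i.e. subsets `A` of `{1,...,n}` with `|A| = k` and `gcd(A) = 1`. -/
def fk (n k : ℕ) : ℕ :=
  ((Finset.Icc 1 n).powerset.filter (fun A => A.card = k ∧ A.gcd id = 1)).card

open Finset

lemma insert2_injOn (m a b : ℕ) (D : Finset ℕ) (haD : a ∉ D) (hbD : b ∉ D) :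
    Set.InjOn (fun S => insert a (insert b S)) ((D.powersetCard m : Finset (Finset ℕ)) : Set (Finset ℕ)) := by
  intro S hS S' hS' h
  simp only [mem_coe, mem_powersetCard] at hS hS'
  simp only at h
  ext x
  have key : ∀ (U : Finset ℕ), U ⊆ D → ∀ y, y ∈ U → y ∈ insert a (insert b U) ∧ y ≠ a ∧ y ≠ b := by
    intro U hU y hy
    refine ⟨by simp [hy], fun e => haD (e ▸ hU hy), fun e => hbD (e ▸ hU hy)⟩
  constructor
  · intro hx
    obtain ⟨h1, h2, h3⟩ := key S hS.1 x hx
    rw [h] at h1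
    simpa [h2, h3] using h1
  · intro hx
    obtain ⟨h1, h2, h3⟩ := key S' hS'.1 x hx
    rw [← h] at h1
    simpa [h2, h3] using h1

lemma mem_target {n k a b : ℕ} {D S : Finset ℕ} (hD : D ⊆ Finset.Icc 1 n)
    (ha : a ∈ Finset.Icc 1 n) (hb : b ∈ Finset.Icc 1 n) (hab : a ≠ b)
    (haD : a ∉ D) (hbD : b ∉ D) (hg : Nat.gcd a b = 1)
    (hS : S ∈ D.powersetCard (k - 2)) (hk : 2 ≤ k) :
    insert a (insert b S) ∈
      (Finset.Icc 1 n).powerset.filter (fun A => A.card = k ∧ A.gcd id = 1) := by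
  rw [mem_powersetCard] at hS
  obtain ⟨hSD, hScard⟩ := hS
  have hbS : b ∉ S := fun h => hbD (hSD h)
  have haS : a ∉ insert b S := by
    simp only [mem_insert]
    rintro (rfl | h)
    · exact hab rfl
    · exact haD (hSD h)
  refine mem_filter.mpr ⟨mem_powerset.mpr ?_, ?_, ?_⟩
  · intro x hx
    simp only [mem_insert] at hx
    rcases hx with rfl | rfl | hx
    · exact ha
    · exact hb
    · exact hD (hSD hx)
  · rw [card_insert_of_notMem haS, card_insert_of_notMem hbS, hScard]
    omega
  · set A := insert a (insert b S) with hA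
    have hga : A.gcd id ∣ a := Finset.gcd_dvd (by simp [hA])
    have hgb : A.gcd id ∣ b := Finset.gcd_dvd (by simp [hA])
    have := Nat.dvd_gcd hga hgb
    rw [hg] at this
    exact Nat.eq_one_of_dvd_one this

/-- For `n ≥ 5` and `k ≥ 1`,
`f_k(n) ≥ C(n-1, k-1) + C(n-3, k-2) + 2·C(n-4, k-2)`, where by convention the
binomial coefficient `C(m, k-2)` vanishes when `k = 1` (i.e. when `k - 2 = -1`). -/
theorem fk_lower_bound (n k : ℕ) (hn : 5 ≤ n) (hk : 0 < k) :
    (n - 1).choose (k - 1) +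
      (if 2 ≤ k then (n - 3).choose (k - 2) + 2 * (n - 4).choose (k - 2) else 0) ≤
      fk n k := by
  classical
  set T := (Finset.Icc 1 n).powerset.filter (fun A => A.card = k ∧ A.gcd id = 1) with hT
  -- family 1: sets containing 1
  set G1 := ((Finset.Icc 2 n).powersetCard (k - 1)).image (fun S => insert 1 S) with hG1
  have hG1sub : G1 ⊆ T := by
    intro A hA
    simp only [hG1, mem_image] at hA
    obtain ⟨S, hS, rfl⟩ := hA
    rw [mem_powersetCard] at hS
    obtain ⟨hSD, hScard⟩ := hS
    have h1S : (1 : ℕ) ∉ S := fun h => by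
      have := hSD h; rw [mem_Icc] at this; omega
    refine mem_filter.mpr ⟨mem_powerset.mpr ?_, ?_, ?_⟩
    · intro x hx
      simp only [mem_insert] at hx
      rcases hx with rfl | hx
      · rw [mem_Icc]; omega
      · have := hSD hx; rw [mem_Icc] at this ⊢; omega
    · rw [card_insert_of_notMem h1S, hScard]; omega
    · have : (insert 1 S).gcd id ∣ 1 := Finset.gcd_dvd (by simp)
      exact Nat.eq_one_of_dvd_one this
  have hG1card : G1.card = (n - 1).choose (k - 1) := by
    rw [hG1, card_image_of_injOn, card_powersetCard, Nat.card_Icc]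
    · congr 1 <;> omega
    · intro S hS S' hS' h
      simp only [mem_coe, mem_powersetCard] at hS hS'
      simp only at h
      have h1S : (1 : ℕ) ∉ S := fun hx => by
        have := hS.1 hx; rw [mem_Icc] at this; omega
      have h1S' : (1 : ℕ) ∉ S' := fun hx => by
        have := hS'.1 hx; rw [mem_Icc] at this; omega
      have := congrArg (fun U => Finset.erase U 1) h
      simpa [Finset.erase_insert h1S, Finset.erase_insert h1S'] using this
  rcases lt_or_ge k 2 with hk2 | hk2
  · simp only [if_neg (by omega : ¬ 2 ≤ k), add_zero]
    calc (n - 1).choose (k - 1) = G1.card := hG1card.symm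
      _ ≤ T.card := card_le_card hG1sub
      _ = fk n k := rfl
  · simp only [if_pos hk2]
    set G2 := ((Finset.Icc 4 n).powersetCard (k - 2)).image
      (fun S => insert 2 (insert 3 S)) with hG2
    set G3 := (((Finset.Icc 4 n).erase 5).powersetCard (k - 2)).image
      (fun S => insert 2 (insert 5 S)) with hG3
    set G4 := ((Finset.Icc 5 n).powersetCard (k - 2)).image
      (fun S => insert 3 (insert 4 S)) with hG4
    have hIcc4 : ∀ x ∈ Finset.Icc 4 n, x ∈ Finset.Icc 1 n := by
      intro x hx; rw [mem_Icc] at hx ⊢; omega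
    have hIcc5 : ∀ x ∈ Finset.Icc 5 n, x ∈ Finset.Icc 1 n := by
      intro x hx; rw [mem_Icc] at hx ⊢; omega
    have hG2sub : G2 ⊆ T := by
      intro A hA
      simp only [hG2, mem_image] at hA
      obtain ⟨S, hS, rfl⟩ := hA
      exact mem_target hIcc4 (by rw [mem_Icc]; omega) (by rw [mem_Icc]; omega)
        (by norm_num) (by rw [mem_Icc]; omega) (by rw [mem_Icc]; omega)
        (by norm_num) hS hk2
    have hG3sub : G3 ⊆ T := by
      intro A hA
      simp only [hG3, mem_image] at hA
      obtain ⟨S, hS, rfl⟩ := hA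
      refine mem_target (fun x hx => hIcc4 x (Finset.mem_of_mem_erase hx))
        (by rw [mem_Icc]; omega) (by rw [mem_Icc]; omega)
        (by norm_num) ?_ ?_ (by norm_num) hS hk2
      · intro h; have := Finset.mem_of_mem_erase h; rw [mem_Icc] at this; omega
      · exact Finset.notMem_erase 5 _
    have hG4sub : G4 ⊆ T := by
      intro A hA
      simp only [hG4, mem_image] at hA
      obtain ⟨S, hS, rfl⟩ := hA
      exact mem_target hIcc5 (by rw [mem_Icc]; omega) (by rw [mem_Icc]; omega)
        (by norm_num) (by rw [mem_Icc]; omega) (by rw [mem_Icc]; omega)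
        (by norm_num) hS hk2
    have hG2card : G2.card = (n - 3).choose (k - 2) := by
      rw [hG2, card_image_of_injOn
        (insert2_injOn _ 2 3 _ (by rw [mem_Icc]; omega) (by rw [mem_Icc]; omega)),
        card_powersetCard, Nat.card_Icc]
      congr 1 <;> omega
    have hG3card : G3.card = (n - 4).choose (k - 2) := by
      rw [hG3, card_image_of_injOn
        (insert2_injOn _ 2 5 _ ?_ (Finset.notMem_erase 5 _)),
        card_powersetCard, Finset.card_erase_of_mem (by rw [mem_Icc]; omega),
        Nat.card_Icc]
      · congr 1 <;> omega
      · intro h; have := Finset.mem_of_mem_erase h; rw [mem_Icc] at this; omega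
    have hG4card : G4.card = (n - 4).choose (k - 2) := by
      rw [hG4, card_image_of_injOn
        (insert2_injOn _ 3 4 _ (by rw [mem_Icc]; omega) (by rw [mem_Icc]; omega)),
        card_powersetCard, Nat.card_Icc]
      congr 1 <;> omega
    -- membership facts for disjointness
    have mem1 : ∀ A ∈ G1, (1 : ℕ) ∈ A := by
      intro A hA; simp only [hG1, mem_image] at hA
      obtain ⟨S, _, rfl⟩ := hA; simp
    have nmem1_2 : ∀ A ∈ G2, (1 : ℕ) ∉ A := by
      intro A hA; simp only [hG2, mem_image] at hA
      obtain ⟨S, hS, rfl⟩ := hA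
      rw [mem_powersetCard] at hS
      simp only [mem_insert]
      rintro (h | h | h)
      · omega
      · omega
      · have := hS.1 h; rw [mem_Icc] at this; omega
    have nmem1_3 : ∀ A ∈ G3, (1 : ℕ) ∉ A := by
      intro A hA; simp only [hG3, mem_image] at hA
      obtain ⟨S, hS, rfl⟩ := hA
      rw [mem_powersetCard] at hS
      simp only [mem_insert]
      rintro (h | h | h)
      · omega
      · omega
      · have := Finset.mem_of_mem_erase (hS.1 h); rw [mem_Icc] at this; omega
    have nmem1_4 : ∀ A ∈ G4, (1 : ℕ) ∉ A := by
      intro A hA; simp only [hG4, mem_image] at hA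
      obtain ⟨S, hS, rfl⟩ := hA
      rw [mem_powersetCard] at hS
      simp only [mem_insert]
      rintro (h | h | h)
      · omega
      · omega
      · have := hS.1 h; rw [mem_Icc] at this; omega
    have mem3_2 : ∀ A ∈ G2, (3 : ℕ) ∈ A := by
      intro A hA; simp only [hG2, mem_image] at hA
      obtain ⟨S, _, rfl⟩ := hA; simp
    have nmem3_3 : ∀ A ∈ G3, (3 : ℕ) ∉ A := by
      intro A hA; simp only [hG3, mem_image] at hA
      obtain ⟨S, hS, rfl⟩ := hA
      rw [mem_powersetCard] at hS
      simp only [mem_insert]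
      rintro (h | h | h)
      · omega
      · omega
      · have := Finset.mem_of_mem_erase (hS.1 h); rw [mem_Icc] at this; omega
    have mem2_2 : ∀ A ∈ G2, (2 : ℕ) ∈ A := by
      intro A hA; simp only [hG2, mem_image] at hA
      obtain ⟨S, _, rfl⟩ := hA; simp
    have mem2_3 : ∀ A ∈ G3, (2 : ℕ) ∈ A := by
      intro A hA; simp only [hG3, mem_image] at hA
      obtain ⟨S, _, rfl⟩ := hA; simp
    have nmem2_4 : ∀ A ∈ G4, (2 : ℕ) ∉ A := by
      intro A hA; simp only [hG4, mem_image] at hA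
      obtain ⟨S, hS, rfl⟩ := hA
      rw [mem_powersetCard] at hS
      simp only [mem_insert]
      rintro (h | h | h)
      · omega
      · omega
      · have := hS.1 h; rw [mem_Icc] at this; omega
    have d12 : Disjoint G1 G2 := Finset.disjoint_left.mpr
      (fun A h1 h2 => nmem1_2 A h2 (mem1 A h1))
    have d13 : Disjoint G1 G3 := Finset.disjoint_left.mpr
      (fun A h1 h2 => nmem1_3 A h2 (mem1 A h1))
    have d14 : Disjoint G1 G4 := Finset.disjoint_left.mpr
      (fun A h1 h2 => nmem1_4 A h2 (mem1 A h1))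
    have d23 : Disjoint G2 G3 := Finset.disjoint_left.mpr
      (fun A h1 h2 => nmem3_3 A h2 (mem3_2 A h1))
    have d24 : Disjoint G2 G4 := Finset.disjoint_left.mpr
      (fun A h1 h2 => nmem2_4 A h2 (mem2_2 A h1))
    have d34 : Disjoint G3 G4 := Finset.disjoint_left.mpr
      (fun A h1 h2 => nmem2_4 A h2 (mem2_3 A h1))
    have hunion : (G1 ∪ G2 ∪ G3 ∪ G4).card
        = G1.card + G2.card + G3.card + G4.card := by
      rw [Finset.card_union_of_disjoint, Finset.card_union_of_disjoint,
        Finset.card_union_of_disjoint d12]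
      · exact Finset.disjoint_union_left.mpr ⟨d13, d23⟩
      · exact Finset.disjoint_union_left.mpr
          ⟨Finset.disjoint_union_left.mpr ⟨d14, d24⟩, d34⟩
    have hsub : G1 ∪ G2 ∪ G3 ∪ G4 ⊆ T := by
      intro A hA
      simp only [mem_union] at hA
      rcases hA with ((h | h) | h) | h
      · exact hG1sub h
      · exact hG2sub h
      · exact hG3sub h
      · exact hG4sub h
    calc (n - 1).choose (k - 1) + ((n - 3).choose (k - 2) + 2 * (n - 4).choose (k - 2))
        = G1.card + G2.card + G3.card + G4.card := by
          rw [hG1card, hG2card, hG3card, hG4card]; ring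
      _ = (G1 ∪ G2 ∪ G3 ∪ G4).card := hunion.symm
      _ ≤ T.card := card_le_card hsub
      _ = fk n k := rfl
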